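/- Let ψ : ℝ^d → ℝ^d be defined by ψ(x) = x(1+|x|^δ)^{-1} with δ ≥ 2. Then for all x ∈ ℝ^d, ‖ψ'(x) − I‖ ≤ min(1 + δ/4, (δ+1)|x|^δ), where I is the identity map on ℝ^d. -/

import Mathlib

set_option maxHeartbeats 1000000 in
set_option synthInstance.maxHeartbeats 400000 in
/-- For `ψ(x) = x (1 + |x|^δ)⁻¹` with `δ ≥ 2`, the operator norm of
`ψ'(x) − I` satisfies `‖ψ'(x) − I‖ ≤ min(1 + δ/4, (δ+1)|x|^δ)`. -/
theorem stmt1 (d : ℕ) (δ : ℝ) (hδ : 2 ≤ δ)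
    (ψ : EuclideanSpace ℝ (Fin d) → EuclideanSpace ℝ (Fin d))
    (hψ : ∀ x, ψ x = (1 + ‖x‖ ^ δ)⁻¹ • x) :
    ∀ x : EuclideanSpace ℝ (Fin d),
      ‖fderiv ℝ ψ x - ContinuousLinearMap.id ℝ (EuclideanSpace ℝ (Fin d))‖
        ≤ min (1 + δ / 4) ((δ + 1) * ‖x‖ ^ δ) := by
  intro x
  set t : ℝ := ‖x‖ ^ δ with ht
  have htnn : 0 ≤ t := Real.rpow_nonneg (norm_nonneg x) δ
  have h1t : (0:ℝ) < 1 + t := by linarith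
  have h1t' : (1:ℝ) + t ≠ 0 := ne_of_gt h1t
  have hδ0 : (0:ℝ) ≤ δ := by linarith
  -- derivative of y ↦ ‖y‖^δ
  have hg : HasFDerivAt (fun y : EuclideanSpace ℝ (Fin d) => ‖y‖ ^ δ)
      ((δ * ‖x‖ ^ (δ - 2)) • innerSL ℝ x) x :=
    hasFDerivAt_norm_rpow x (by linarith)
  set G : EuclideanSpace ℝ (Fin d) →L[ℝ] ℝ := (δ * ‖x‖ ^ (δ - 2)) • innerSL ℝ x with hG
  have h1g : HasFDerivAt (fun y : EuclideanSpace ℝ (Fin d) => 1 + ‖y‖ ^ δ) G x :=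
    hg.const_add 1
  have hc : HasFDerivAt (fun y : EuclideanSpace ℝ (Fin d) => (1 + ‖y‖ ^ δ)⁻¹)
      ((-((1 + t) ^ 2)⁻¹) • G) x :=
    (hasDerivAt_inv h1t').comp_hasFDerivAt x h1g
  have hψ' : HasFDerivAt ψ
      ((1 + t)⁻¹ • ContinuousLinearMap.id ℝ (EuclideanSpace ℝ (Fin d))
        + ((-((1 + t) ^ 2)⁻¹) • G).smulRight x) x := by
    have hfun : ψ = fun y : EuclideanSpace ℝ (Fin d) => (1 + ‖y‖ ^ δ)⁻¹ • y := funext hψ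
    rw [hfun]
    exact hc.smul (hasFDerivAt_id x)
  rw [hψ'.fderiv]
  set S : EuclideanSpace ℝ (Fin d) →L[ℝ] EuclideanSpace ℝ (Fin d) :=
    ((-((1 + t) ^ 2)⁻¹) • G).smulRight x with hS
  have hsub : (1 + t)⁻¹ • ContinuousLinearMap.id ℝ (EuclideanSpace ℝ (Fin d)) + S
      - ContinuousLinearMap.id ℝ (EuclideanSpace ℝ (Fin d))
      = ((1 + t)⁻¹ - 1) • ContinuousLinearMap.id ℝ (EuclideanSpace ℝ (Fin d)) + S := by
    have h := sub_smul ((1 + t)⁻¹) (1:ℝ) (ContinuousLinearMap.id ℝ (EuclideanSpace ℝ (Fin d)))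
    rw [h, one_smul]
    abel
  rw [hsub]
  have hGx : ‖G‖ * ‖x‖ ≤ δ * t := by
    have hGn : ‖G‖ ≤ δ * ‖x‖ ^ (δ - 2) * ‖x‖ := by
      rw [hG]
      refine (ContinuousLinearMap.opNorm_smul_le _ _).trans ?_
      rw [innerSL_apply_norm, Real.norm_eq_abs, abs_of_nonneg (by positivity)]
    have e1 : ‖x‖ ^ (δ - 1) = ‖x‖ ^ (δ - 2) * ‖x‖ := by
      rw [← Real.rpow_add_one' (norm_nonneg x) (by intro h; linarith [h])]
      ring_nf
    have e2 : ‖x‖ ^ δ = ‖x‖ ^ (δ - 1) * ‖x‖ := by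
      rw [← Real.rpow_add_one' (norm_nonneg x) (by intro h; linarith [h])]
      ring_nf
    calc ‖G‖ * ‖x‖ ≤ (δ * ‖x‖ ^ (δ - 2) * ‖x‖) * ‖x‖ :=
          mul_le_mul_of_nonneg_right hGn (norm_nonneg x)
      _ = δ * t := by rw [ht, e2, e1]; ring
  have hSn : ‖S‖ ≤ ((1 + t) ^ 2)⁻¹ * (δ * t) := by
    rw [hS, ContinuousLinearMap.norm_smulRight_apply]
    calc ‖(-((1 + t) ^ 2)⁻¹) • G‖ * ‖x‖
        ≤ (‖(-((1 + t) ^ 2)⁻¹)‖ * ‖G‖) * ‖x‖ :=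
          mul_le_mul_of_nonneg_right (ContinuousLinearMap.opNorm_smul_le _ _) (norm_nonneg x)
      _ = ((1 + t) ^ 2)⁻¹ * (‖G‖ * ‖x‖) := by
          rw [Real.norm_eq_abs, abs_neg, abs_of_nonneg (by positivity)]; ring
      _ ≤ ((1 + t) ^ 2)⁻¹ * (δ * t) :=
          mul_le_mul_of_nonneg_left hGx (by positivity)
  have hIn : ‖((1 + t)⁻¹ - 1) • ContinuousLinearMap.id ℝ (EuclideanSpace ℝ (Fin d))‖
      ≤ t / (1 + t) := by
    have h1 : |(1 + t)⁻¹ - 1| = t / (1 + t) := by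
      rw [abs_of_nonpos]
      · field_simp; ring
      · rw [sub_nonpos, inv_le_one_iff₀]; right; linarith
    calc ‖((1 + t)⁻¹ - 1) • ContinuousLinearMap.id ℝ (EuclideanSpace ℝ (Fin d))‖
        ≤ ‖(1 + t)⁻¹ - 1‖ * ‖ContinuousLinearMap.id ℝ (EuclideanSpace ℝ (Fin d))‖ :=
          ContinuousLinearMap.opNorm_smul_le _ _
      _ ≤ ‖(1 + t)⁻¹ - 1‖ * 1 :=
          mul_le_mul_of_nonneg_left ContinuousLinearMap.norm_id_le (norm_nonneg _)
      _ = t / (1 + t) := by rw [mul_one, Real.norm_eq_abs, h1]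
  have hbound : ‖((1 + t)⁻¹ - 1) • ContinuousLinearMap.id ℝ (EuclideanSpace ℝ (Fin d)) + S‖
      ≤ t / (1 + t) + ((1 + t) ^ 2)⁻¹ * (δ * t) :=
    (norm_add_le _ _).trans (add_le_add hIn hSn)
  refine hbound.trans (le_min ?_ ?_)
  · have h1 : t / (1 + t) ≤ 1 := by
      rw [div_le_one h1t]; linarith
    have h2 : ((1 + t) ^ 2)⁻¹ * (δ * t) ≤ δ / 4 := by
      rw [inv_mul_le_iff₀ (by positivity)]
      nlinarith [mul_nonneg hδ0 (sq_nonneg (1 - t))]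
    linarith
  · have h1 : t / (1 + t) ≤ t := div_le_self htnn (by linarith)
    have h2 : ((1 + t) ^ 2)⁻¹ * (δ * t) ≤ δ * t := by
      rw [inv_mul_le_iff₀ (by positivity)]
      nlinarith [mul_nonneg (mul_nonneg hδ0 htnn) htnn,
        mul_nonneg (mul_nonneg (mul_nonneg hδ0 htnn) htnn) htnn]
    have h3 : (δ + 1) * t = δ * t + t := by ring
    linarith
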